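/- Terminating form of Heine's q-Gauss theorem: Σ_{k=0}^{n} (-1)^k [n k]_q q^{binom(n-k,2)} (c/a;q)_k / (c;q)_k = q^{binom(n,2)} (a;q)_n (c/a)^n / (c;q)_n, for complex a ≠ 0, c, q with (c;q)_n ≠ 0 and q-binomial coefficients well-defined. -/

import Mathlib

noncomputable def qpoch (a q : ℂ) (n : ℕ) : ℂ := ∏ i ∈ Finset.range n, (1 - a * q ^ i)

noncomputable def qbinom (q : ℂ) (n k : ℕ) : ℂ :=
  qpoch q q n / (qpoch q q k * qpoch q q (n - k))

lemma qpoch_zero (x q : ℂ) : qpoch x q 0 = 1 := by simp [qpoch]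

lemma qpoch_succ (x q : ℂ) (n : ℕ) : qpoch x q (n+1) = qpoch x q n * (1 - x * q ^ n) :=
  Finset.prod_range_succ _ _

lemma qpoch_succ' (x q : ℂ) (n : ℕ) : qpoch x q (n+1) = (1 - x) * qpoch (x*q) q n := by
  unfold qpoch
  rw [Finset.prod_range_succ']
  simp only [pow_zero, mul_one]
  rw [mul_comm]
  congr 1
  apply Finset.prod_congr rfl
  intro i _
  ring

lemma qpoch_add (x q : ℂ) (k m : ℕ) :
    qpoch x q (k + m) = qpoch x q k * qpoch (x * q ^ k) q m := by
  unfold qpoch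
  rw [Finset.prod_range_add]
  congr 1
  apply Finset.prod_congr rfl
  intro i _
  rw [pow_add]
  ring

noncomputable def gb (q : ℂ) : ℕ → ℕ → ℂ
  | _, 0 => 1
  | 0, _+1 => 0
  | n+1, k+1 => q^(k+1) * gb q n (k+1) + gb q n k

lemma gb_zero (q : ℂ) (n : ℕ) : gb q n 0 = 1 := by cases n <;> rfl

lemma gb_succ (q : ℂ) (n k : ℕ) :
    gb q (n+1) (k+1) = q^(k+1) * gb q n (k+1) + gb q n k := rfl

lemma gb_of_lt (q : ℂ) : ∀ n k, n < k → gb q n k = 0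
  | 0, _+1, _ => rfl
  | n+1, k+1, h => by
      rw [gb_succ, gb_of_lt q n (k+1) (by omega), gb_of_lt q n k (by omega)]
      ring

lemma gb_diag (q : ℂ) : ∀ n, gb q n n = 1
  | 0 => rfl
  | n+1 => by rw [gb_succ, gb_of_lt q n (n+1) (by omega), gb_diag q n]; ring

lemma tri_succ (m : ℕ) : (m+1)*((m+1)-1)/2 = m*(m-1)/2 + m := by
  simp only [Nat.add_sub_cancel]
  rcases m with _ | l
  · simp
  · simp only [Nat.add_sub_cancel]
    obtain ⟨t, ht⟩ := Nat.even_mul_succ_self l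
    have h1 : (l+1+1)*(l+1) = 2*t + 2*(l+1) := by
      have h : (l+1+1)*(l+1) = l*(l+1) + 2*(l+1) := by ring
      omega
    have h2 : (l+1)*l = 2*t := by
      have h : (l+1)*l = l*(l+1) := by ring
      omega
    rw [h1, h2]
    omega

lemma qbinom_eq_gb (q : ℂ) (n : ℕ) (hq : ∀ m ≤ n, qpoch q q m ≠ 0) :
    ∀ k ≤ n, qbinom q n k = gb q n k := by
  induction n with
  | zero =>
      intro k hk
      interval_cases k
      simp [qbinom, qpoch, gb_zero]
  | succ n ih =>
      have hq' : ∀ m ≤ n, qpoch q q m ≠ 0 := fun m hm => hq m (by omega)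
      intro k hk
      cases k with
      | zero =>
          rw [gb_zero]
          unfold qbinom
          rw [Nat.sub_zero, qpoch_zero, one_mul, div_self (hq (n+1) le_rfl)]
      | succ k =>
          rcases Nat.lt_or_ge k n with hkn | hkn
          · rw [gb_succ, ← ih hq' (k+1) (by omega), ← ih hq' k (by omega)]
            unfold qbinom
            have e1 : n + 1 - (k+1) = n - k := by omega
            have e2 : n - (k+1) = n - k - 1 := by omega
            rw [e1, e2]
            have e3 : n - k = (n - k - 1) + 1 := by omega
            rw [e3, qpoch_succ q q n, qpoch_succ q q k, qpoch_succ q q (n-k-1)]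
            have hA : qpoch q q n ≠ 0 := hq' n le_rfl
            have hB : qpoch q q k ≠ 0 := hq' k (by omega)
            have hC : qpoch q q (n-k-1) ≠ 0 := hq' _ (by omega)
            have hD : (1 - q * q ^ k) ≠ 0 := by
              intro h
              apply hq' (k+1) (by omega)
              rw [qpoch_succ, h, mul_zero]
            have hE : (1 - q * q ^ (n-k-1)) ≠ 0 := by
              intro h
              apply hq' (n-k) (by omega)
              rw [e3, qpoch_succ, h, mul_zero]
            have epow : q ^ n = q ^ k * q ^ (n-k-1) * q := by
              rw [← pow_add, ← pow_succ]
              congr 1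
              omega
            rw [epow]
            simp only [Nat.add_sub_cancel]
            field_simp
            ring
          · have hkeq : k = n := by omega
            subst hkeq
            rw [gb_diag]
            unfold qbinom
            rw [Nat.sub_self, qpoch_zero, mul_one, div_self (hq (k+1) le_rfl)]

lemma key (q a : ℂ) : ∀ n : ℕ, ∀ b : ℂ,
    ∑ k ∈ Finset.range (n+1),
        (-1:ℂ)^k * gb q n k * q^((n-k)*(n-k-1)/2) * qpoch b q k * qpoch (a*b*q^k) q (n-k)
      = q^(n*(n-1)/2) * qpoch a q n * b^n := by
  intro n
  induction n with
  | zero =>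
      intro b
      simp [qpoch, gb_zero]
  | succ n ih =>
      intro b
      rw [Finset.sum_range_succ']
      have hA : ∑ i ∈ Finset.range (n+1),
          (-1:ℂ)^(i+1) * gb q (n+1) (i+1) * q^((n+1-(i+1))*(n+1-(i+1)-1)/2)
            * qpoch b q (i+1) * qpoch (a*b*q^(i+1)) q (n+1-(i+1))
          = (∑ i ∈ Finset.range (n+1),
              (-1:ℂ)^(i+1) * q^(i+1) * gb q n (i+1) * q^((n+1-(i+1))*(n+1-(i+1)-1)/2)
                * qpoch b q (i+1) * qpoch (a*b*q^(i+1)) q (n+1-(i+1)))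
            - (1-b) * ∑ i ∈ Finset.range (n+1),
                (-1:ℂ)^i * gb q n i * q^((n-i)*(n-i-1)/2)
                  * qpoch (b*q) q i * qpoch (a*(b*q)*q^i) q (n-i) := by
        rw [Finset.mul_sum, ← Finset.sum_sub_distrib]
        apply Finset.sum_congr rfl
        intro i hi
        rw [gb_succ]
        have e1 : n + 1 - (i+1) = n - i := by omega
        rw [e1]
        rw [qpoch_succ' b q i]
        have earg : a*b*q^(i+1) = a*(b*q)*q^i := by ring
        rw [earg]
        ring
      have hB : ∑ i ∈ Finset.range (n+1),
            (-1:ℂ)^(i+1) * q^(i+1) * gb q n (i+1) * q^((n+1-(i+1))*(n+1-(i+1)-1)/2)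
              * qpoch b q (i+1) * qpoch (a*b*q^(i+1)) q (n+1-(i+1))
          = (∑ i ∈ Finset.range (n+1),
              (-1:ℂ)^i * q^i * gb q n i * q^((n+1-i)*(n+1-i-1)/2)
                * qpoch b q i * qpoch (a*b*q^i) q (n+1-i))
            - (-1:ℂ)^0 * q^0 * gb q n 0 * q^((n+1-0)*(n+1-0-1)/2)
                * qpoch b q 0 * qpoch (a*b*q^0) q (n+1-0) := by
        have h1 := Finset.sum_range_succ'
          (fun j => (-1:ℂ)^j * q^j * gb q n j * q^((n+1-j)*(n+1-j-1)/2)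
            * qpoch b q j * qpoch (a*b*q^j) q (n+1-j)) (n+1)
        have h2 := Finset.sum_range_succ
          (fun j => (-1:ℂ)^j * q^j * gb q n j * q^((n+1-j)*(n+1-j-1)/2)
            * qpoch b q j * qpoch (a*b*q^j) q (n+1-j)) (n+1)
        rw [gb_of_lt q n (n+1) (by omega)] at h2
        rw [h2] at h1
        simp only [mul_zero, zero_mul, add_zero] at h1
        linear_combination -h1
      have hC : ∑ i ∈ Finset.range (n+1),
            (-1:ℂ)^i * q^i * gb q n i * q^((n+1-i)*(n+1-i-1)/2)
              * qpoch b q i * qpoch (a*b*q^i) q (n+1-i)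
          = q^n * (1 - a*b*q^n) * ∑ i ∈ Finset.range (n+1),
              (-1:ℂ)^i * gb q n i * q^((n-i)*(n-i-1)/2)
                * qpoch b q i * qpoch (a*b*q^i) q (n-i) := by
        rw [Finset.mul_sum]
        apply Finset.sum_congr rfl
        intro i hi
        have hi' : i ≤ n := by
          have := Finset.mem_range.mp hi
          omega
        have e1 : n + 1 - i = (n - i) + 1 := by omega
        rw [e1, tri_succ (n-i), pow_add, qpoch_succ (a*b*q^i) q (n-i)]
        have hu : q ^ n = q ^ i * q ^ (n-i) := by
          rw [← pow_add]
          congr 1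
          omega
        rw [hu]
        ring
      rw [hA, hB, hC, ih b, ih (b*q)]
      simp only [gb_zero, qpoch_zero, pow_zero, Nat.sub_zero, mul_one, one_mul]
      rw [tri_succ n, pow_add, qpoch_succ a q n]
      ring

theorem terminating_q_gauss (q a c : ℂ) (ha : a ≠ 0) (n : ℕ)
    (hc : ∀ i < n, 1 - c * q ^ i ≠ 0) (hpoch : ∀ k ≤ n, qpoch q q k ≠ 0) :
    ∑ k ∈ Finset.range (n + 1),
        (-1) ^ k * qbinom q n k * q ^ ((n - k) * (n - k - 1) / 2) *
          (qpoch (c / a) q k / qpoch c q k) =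
      q ^ (n * (n - 1) / 2) * qpoch a q n * (c / a) ^ n / qpoch c q n := by
  have hcn : qpoch c q n ≠ 0 := by
    unfold qpoch
    rw [Finset.prod_ne_zero_iff]
    intro i hi
    exact hc i (Finset.mem_range.mp hi)
  have hck : ∀ k ≤ n, qpoch c q k ≠ 0 := by
    intro k hk
    unfold qpoch
    rw [Finset.prod_ne_zero_iff]
    intro i hi
    exact hc i (by have := Finset.mem_range.mp hi; omega)
  have hsplit : ∀ k ≤ n, qpoch c q n = qpoch c q k * qpoch (c * q ^ k) q (n - k) := by
    intro k hk
    rw [← qpoch_add]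
    congr 1
    omega
  have hab : a * (c / a) = c := by field_simp
  have hkey := key q a n (c / a)
  rw [eq_div_iff hcn, Finset.sum_mul, ← hkey]
  apply Finset.sum_congr rfl
  intro k hk
  have hk' : k ≤ n := by
    have := Finset.mem_range.mp hk
    omega
  rw [qbinom_eq_gb q n hpoch k hk', hsplit k hk', hab]
  have h0 := hck k hk'
  field_simp
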